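/- For reals c > 0, n > c, integers ρ ≥ 1, j ≥ 1, and t ≥ 0: ∫_0^t [μ_{n,j,ρ}(u) − μ_{n,j+1,ρ}(u)] du = Σ_{i=0}^{ρ−1} p_{nρ+c, i+jρ}(t), where μ_{n,j,ρ}(u) = (c^{jρ}/B(jρ, nρ/c + 1)) u^{jρ−1}(1+cu)^{−(n/c+j)ρ−1} and p_{m,i}(t) = ((Π_{l=0}^{i−1}(m+cl))/i!) t^i (1+ct)^{−(m/c + i)}. -/

import Mathlib

open MeasureTheory

open Finset in
private lemma gamma_prod (s : ℝ) (hs : 0 < s) (k : ℕ) :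
    Real.Gamma (s + k) = Real.Gamma s * ∏ l ∈ Finset.range k, (s + l) := by
  induction k with
  | zero => simp
  | succ k ih =>
    have h1 : s + ((k : ℕ) + 1 : ℕ) = (s + k) + 1 := by push_cast; ring
    rw [h1, Real.Gamma_add_one (by positivity), ih, Finset.prod_range_succ]
    ring

private lemma coeff_eq (c m s : ℝ) (hc : 0 < c) (hs : 0 < s) (hm : m = c * s) (K : ℕ) :
    c ^ (K + 1) / ((K.factorial : ℝ) * Real.Gamma s / Real.Gamma (s + ((K + 1 : ℕ) : ℝ))) =
      (∏ l ∈ Finset.range (K + 1), (m + c * l)) / (K.factorial : ℝ) := by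
  have hprod : ∏ l ∈ Finset.range (K + 1), (m + c * l)
      = c ^ (K + 1) * ∏ l ∈ Finset.range (K + 1), (s + l) := by
    calc ∏ l ∈ Finset.range (K + 1), (m + c * l)
        = ∏ l ∈ Finset.range (K + 1), (c * (s + l)) :=
          Finset.prod_congr rfl (fun l _ => by rw [hm]; ring)
      _ = c ^ (K + 1) * ∏ l ∈ Finset.range (K + 1), (s + l) := by
          rw [Finset.prod_mul_distrib, Finset.prod_const, Finset.card_range]
  have hΓ : 0 < Real.Gamma s := Real.Gamma_pos_of_pos hs
  have hpp : 0 < ∏ l ∈ Finset.range (K + 1), ((s : ℝ) + l) :=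
    Finset.prod_pos fun l _ => by positivity
  have hf : (0:ℝ) < K.factorial := by positivity
  rw [gamma_prod s hs, hprod]
  field_simp

private lemma hasDerivAt_term (A c m r : ℝ) (hc : c ≠ 0) (k : ℕ) (x : ℝ)
    (hx : 0 < 1 + c * x) (hr : r = m / c + ((k : ℝ) + 1)) :
    HasDerivAt (fun y : ℝ => A * y ^ (k + 1) * (1 + c * y) ^ (-r))
      (A * ((k : ℝ) + 1) * x ^ k * (1 + c * x) ^ (-r)
        - A * (m + c * ((k : ℝ) + 1)) * x ^ (k + 1) * (1 + c * x) ^ (-(r + 1))) x := by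
  have hb : HasDerivAt (fun y : ℝ => 1 + c * y) c x := by
    simpa using ((hasDerivAt_id x).const_mul c).const_add 1
  have h2 : HasDerivAt (fun y : ℝ => (1 + c * y) ^ (-r))
      ((-r) * (1 + c * x) ^ (-r - 1) * c) x := by
    have := hb.rpow_const (p := -r) (Or.inl hx.ne')
    convert this using 1; ring
  have h1 : HasDerivAt (fun y : ℝ => A * y ^ (k + 1)) (A * (((k:ℝ) + 1) * x ^ k)) x := by
    simpa using (hasDerivAt_pow (k + 1) x).const_mul A
  have h := h1.mul h2
  refine h.congr_deriv ?_
  have e1 : (-(r + 1)) = -r - 1 := by ring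
  rw [e1]
  have hrc : (-r) * c = -(m + c * ((k : ℝ) + 1)) := by
    rw [hr]; field_simp
  have : A * x ^ (k + 1) * ((-r) * (1 + c * x) ^ (-r - 1) * c)
      = -(A * (m + c * ((k : ℝ) + 1)) * x ^ (k + 1) * (1 + c * x) ^ (-r - 1)) := by
    calc A * x ^ (k + 1) * ((-r) * (1 + c * x) ^ (-r - 1) * c)
        = ((-r) * c) * (A * x ^ (k + 1) * (1 + c * x) ^ (-r - 1)) := by ring
      _ = _ := by rw [hrc]; ring
  rw [this]; ring

/-- Lemma 2 (c > 0, j ≥ 1): the difference of incomplete Beta-type integrals equals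
a block sum of Baskakov basis functions.  Here B(x,y) = Γ(x)Γ(y)/Γ(x+y). -/
theorem stmt_5 (c n : ℝ) (hc : 0 < c) (hn : c < n) (ρ j : ℕ) (hρ : 1 ≤ ρ) (hj : 1 ≤ j)
    (t : ℝ) (ht : 0 ≤ t) :
    (∫ u in (0:ℝ)..t,
      ((c ^ (j * ρ) /
          (Real.Gamma (↑(j * ρ)) * Real.Gamma (n * ρ / c + 1) /
            Real.Gamma (↑(j * ρ) + n * ρ / c + 1))) *
        u ^ (j * ρ - 1) * (1 + c * u) ^ (-((n / c + j) * (ρ : ℝ) + 1))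
      - (c ^ ((j + 1) * ρ) /
          (Real.Gamma (↑((j + 1) * ρ)) * Real.Gamma (n * ρ / c + 1) /
            Real.Gamma (↑((j + 1) * ρ) + n * ρ / c + 1))) *
        u ^ ((j + 1) * ρ - 1) * (1 + c * u) ^ (-((n / c + (j + 1)) * (ρ : ℝ) + 1)))) =
    ∑ i ∈ Finset.range ρ,
      ((∏ l ∈ Finset.range (i + j * ρ), (n * ρ + c + c * l)) /
          (Nat.factorial (i + j * ρ) : ℝ)) *
        t ^ (i + j * ρ) * (1 + c * t) ^ (-((n * ρ + c) / c + (↑(i + j * ρ) : ℝ))) := by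
  have hc' : c ≠ 0 := hc.ne'
  have hρ' : (0:ℝ) < ρ := by exact_mod_cast hρ
  have hn0 : 0 < n := hc.trans hn
  have hnρ : 0 < n * ρ := mul_pos hn0 hρ'
  set m : ℝ := n * ρ + c with hm
  set s : ℝ := n * ρ / c + 1 with hs
  have hs0 : 0 < s := by rw [hs]; positivity
  have hms : m = c * s := by rw [hm, hs]; field_simp
  have hjρ : 1 ≤ j * ρ := Nat.one_le_iff_ne_zero.mpr (by positivity)
  obtain ⟨K, hK⟩ : ∃ K, j * ρ = K + 1 := ⟨j * ρ - 1, (Nat.succ_pred_eq_of_pos hjρ).symm⟩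
  have hK2 : (j + 1) * ρ = ρ + K + 1 := by rw [add_mul, one_mul, hK]; omega
  -- the antiderivative pieces
  set G : ℕ → ℝ → ℝ := fun i x =>
    (∏ l ∈ Finset.range (i + K + 1), (m + c * l)) / (i + K).factorial * x ^ (i + K) *
      (1 + c * x) ^ (-(m / c + (((i + K + 1 : ℕ)) : ℝ))) with hG
  set F : ℝ → ℝ := fun x => ∑ i ∈ Finset.range ρ,
    (∏ l ∈ Finset.range (i + K + 1), (m + c * l)) / ((i + K + 1).factorial : ℝ) *
      x ^ (i + K + 1) * (1 + c * x) ^ (-(m / c + (((i + K + 1 : ℕ)) : ℝ))) with hF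
  have hpos : ∀ x ∈ Set.uIcc (0:ℝ) t, 0 < 1 + c * x := by
    intro x hx
    rw [Set.uIcc_of_le ht] at hx
    nlinarith [hx.1]
  -- derivative of each summand
  have hder : ∀ i : ℕ, ∀ x : ℝ, 0 < 1 + c * x →
      HasDerivAt (fun y : ℝ =>
        (∏ l ∈ Finset.range (i + K + 1), (m + c * l)) / ((i + K + 1).factorial : ℝ) *
          y ^ (i + K + 1) * (1 + c * y) ^ (-(m / c + (((i + K + 1 : ℕ)) : ℝ))))
        (G i x - G (i + 1) x) x := by
    intro i x hx
    have h := hasDerivAt_term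
      ((∏ l ∈ Finset.range (i + K + 1), (m + c * l)) / ((i + K + 1).factorial : ℝ))
      c m (m / c + (((i + K + 1 : ℕ)) : ℝ)) hc' (i + K) x hx (by push_cast; ring)
    convert h using 1
    rw [hG]
    have e2 : (i + 1 + K + 1 : ℕ) = (i + K + 1) + 1 := by omega
    have e3 : (i + 1 + K : ℕ) = i + K + 1 := by omega
    simp only [e2, e3]
    have efac : ((i + K + 1).factorial : ℝ) = ((i + K : ℕ) + 1) * (i + K).factorial := by
      rw [Nat.factorial_succ]; push_cast; ring
    have eexp : (-(m / c + (((i + K + 1 : ℕ) + 1 : ℕ) : ℝ)))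
        = -((m / c + (((i + K + 1 : ℕ)) : ℝ)) + 1) := by push_cast; ring
    rw [Finset.prod_range_succ (fun l => (m + c * (l:ℝ))) (i+K+1), eexp, efac]
    have hfac : ((i + K).factorial : ℝ) ≠ 0 := by positivity
    have hfac1 : ((i + K : ℕ) : ℝ) + 1 ≠ 0 := by positivity
    field_simp
    push_cast
    ring
  -- derivative of F
  have hFder : ∀ x : ℝ, 0 < 1 + c * x → HasDerivAt F (G 0 x - G ρ x) x := by
    intro x hx
    have := HasDerivAt.fun_sum (u := Finset.range ρ) (fun i _hi => hder i x hx)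
    rw [Finset.sum_range_sub' (fun i => G i x) ρ] at this
    exact this
  -- the integrand equals G 0 x - G ρ x
  have hint_eq : ∀ x : ℝ,
      ((c ^ (j * ρ) /
          (Real.Gamma (↑(j * ρ)) * Real.Gamma s /
            Real.Gamma (↑(j * ρ) + n * ρ / c + 1))) *
        x ^ (j * ρ - 1) * (1 + c * x) ^ (-((n / c + j) * (ρ : ℝ) + 1))
      - (c ^ ((j + 1) * ρ) /
          (Real.Gamma (↑((j + 1) * ρ)) * Real.Gamma s /
            Real.Gamma (↑((j + 1) * ρ) + n * ρ / c + 1))) *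
        x ^ ((j + 1) * ρ - 1) * (1 + c * x) ^ (-((n / c + (j + 1)) * (ρ : ℝ) + 1)))
      = G 0 x - G ρ x := by
    intro x
    rw [hG]
    simp only [hK, hK2]
    have e1 : (K + 1 - 1 : ℕ) = K := by omega
    have e2 : (ρ + K + 1 - 1 : ℕ) = ρ + K := by omega
    have e3 : (0 + K + 1 : ℕ) = K + 1 := by omega
    have e4 : (0 + K : ℕ) = K := by omega
    simp only [e1, e2, e3, e4]
    have gam1 : Real.Gamma (((K + 1 : ℕ)) : ℝ) = (K.factorial : ℝ) := by
      push_cast; exact_mod_cast Real.Gamma_nat_eq_factorial K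
    have gam2 : Real.Gamma (((ρ + K + 1 : ℕ)) : ℝ) = ((ρ + K).factorial : ℝ) := by
      push_cast
      exact_mod_cast Real.Gamma_nat_eq_factorial (ρ + K)
    have gar1 : ((((K + 1 : ℕ)) : ℝ) + n * ρ / c + 1) = s + ((K + 1 : ℕ) : ℝ) := by
      rw [hs]; push_cast; ring
    have gar2 : ((((ρ + K + 1 : ℕ)) : ℝ) + n * ρ / c + 1) = s + ((ρ + K + 1 : ℕ) : ℝ) := by
      rw [hs]; push_cast; ring
    have exp1 : (-((n / c + (j:ℝ)) * (ρ : ℝ) + 1)) = -(m / c + (((K + 1 : ℕ)) : ℝ)) := by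
      rw [hm, ← hK]; push_cast; field_simp; ring
    have exp2 : (-((n / c + ((j:ℝ) + 1)) * (ρ : ℝ) + 1)) = -(m / c + (((ρ + K + 1 : ℕ)) : ℝ)) := by
      rw [hm]
      have : ((ρ + K + 1 : ℕ) : ℝ) = ((j:ℝ) + 1) * ρ := by
        rw [← hK2]; push_cast; ring
      rw [this]; field_simp; ring
    rw [gam1, gam2, gar1, gar2, exp1, exp2,
      coeff_eq c m s hc hs0 hms K, coeff_eq c m s hc hs0 hms (ρ + K)]
  -- integrability of the integrand
  have hcont : ContinuousOn (fun u : ℝ =>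
      ((c ^ (j * ρ) /
          (Real.Gamma (↑(j * ρ)) * Real.Gamma s /
            Real.Gamma (↑(j * ρ) + n * ρ / c + 1))) *
        u ^ (j * ρ - 1) * (1 + c * u) ^ (-((n / c + j) * (ρ : ℝ) + 1))
      - (c ^ ((j + 1) * ρ) /
          (Real.Gamma (↑((j + 1) * ρ)) * Real.Gamma s /
            Real.Gamma (↑((j + 1) * ρ) + n * ρ / c + 1))) *
        u ^ ((j + 1) * ρ - 1) * (1 + c * u) ^ (-((n / c + (j + 1)) * (ρ : ℝ) + 1))))
      (Set.uIcc 0 t) := by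
    have hb : ∀ u ∈ Set.uIcc (0:ℝ) t, (1 + c * u) ≠ 0 := fun u hu => (hpos u hu).ne'
    have hbase : ContinuousOn (fun u : ℝ => 1 + c * u) (Set.uIcc 0 t) :=
      (continuous_const.add (continuous_const.mul continuous_id)).continuousOn
    apply ContinuousOn.sub
    · exact ((continuous_const.mul (continuous_pow _)).continuousOn).mul
        (hbase.rpow_const fun u hu => Or.inl (hb u hu))
    · exact ((continuous_const.mul (continuous_pow _)).continuousOn).mul
        (hbase.rpow_const fun u hu => Or.inl (hb u hu))
  -- apply FTC
  rw [intervalIntegral.integral_eq_sub_of_hasDerivAt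
    (f := F)
    (fun x hx => by rw [hint_eq x]; exact hFder x (hpos x hx))
    (hcont.intervalIntegrable)]
  have hF0 : F 0 = 0 := by
    rw [hF]
    apply Finset.sum_eq_zero
    intro i _
    simp
  rw [hF0, sub_zero, hF]
  apply Finset.sum_congr rfl
  intro i _
  have e5 : (i + j * ρ : ℕ) = i + K + 1 := by omega
  rw [e5]
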